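/- Let R ∈ k(x)^{n×p} admit a realisation R = X·M^{-1}·Y where X ∈ k[x]^{n×m}, M ∈ k[x]^{m×m} is non-singular, and Y ∈ k[x]^{m×p}. Then for all ℓ ≥ 0, the determinantal denominator φ_ℓ(R) divides det M (up to a nonzero scalar; i.e., the monic normalization of det M is divisible by φ_ℓ(R)). -/

import Mathlib

open Polynomial

noncomputable section

/-- Normalization on a field: every nonzero element normalizes to `1`. -/
noncomputable def fieldNormalizationMonoid (K : Type*) [Field K] : NormalizationMonoid K := by
  classical
  exact
  { normUnit := fun a => if h : a = 0 then 1 else (Units.mk0 a h)⁻¹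
    normUnit_zero := dif_pos rfl
    normUnit_one := by
      rw [dif_neg one_ne_zero]
      exact Units.ext (by simp)
    normUnit_mul_units := fun {a} u ha => by
      rw [dif_neg (mul_ne_zero ha u.ne_zero), dif_neg ha]
      exact Units.ext (by simp) }

attribute [local instance] fieldNormalizationMonoid

noncomputable local instance (K : Type*) [Field K] : NormalizedGCDMonoid (Polynomial K) :=
  UniqueFactorizationMonoid.toNormalizedGCDMonoid _

variable {k : Type*} [Field k] [CharZero k]

/-- The ℓ-th determinantal denominator of a rational matrix: the monic least common
denominator of all minors of size at most ℓ. -/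
def detDen {n p : ℕ} (R : Matrix (Fin n) (Fin p) (RatFunc k)) (ℓ : ℕ) : Polynomial k :=
  (Finset.range (ℓ + 1)).lcm fun i =>
    (Finset.univ : Finset ((Fin i ↪ Fin n) × (Fin i ↪ Fin p))).lcm fun fg =>
      (Matrix.det fun a b => R (fg.1 a) (fg.2 b)).denom

/-- If `R = X M⁻¹ Y` is a realisation of `R` with `X, M, Y` polynomial matrices and `M`
nonsingular, then for all `ℓ ≥ 0`, the determinantal denominator `φ_ℓ(R)` divides the monic
normalization of `det M`. -/
theorem detDen_realisation_dvd {n m p : ℕ} (R : Matrix (Fin n) (Fin p) (RatFunc k))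
    (X : Matrix (Fin n) (Fin m) (Polynomial k)) (M : Matrix (Fin m) (Fin m) (Polynomial k))
    (Y : Matrix (Fin m) (Fin p) (Polynomial k)) (hM : M.det ≠ 0)
    (hR : R = (X.map (algebraMap (Polynomial k) (RatFunc k))) *
        (M.map (algebraMap (Polynomial k) (RatFunc k)))⁻¹ *
        (Y.map (algebraMap (Polynomial k) (RatFunc k))))
    (ℓ : ℕ) :
    detDen R ℓ ∣ normalize M.det := by
  classical
  rw [dvd_normalize_iff]
  set alg := algebraMap (Polynomial k) (RatFunc k) with halg
  have halgM : alg M.det ≠ 0 := RatFunc.algebraMap_ne_zero hM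
  have hMdet : (M.map alg).det ≠ 0 := by
    simpa only [RingHom.map_det, RingHom.mapMatrix_apply] using halgM
  haveI : Invertible (M.map alg) :=
    (M.map alg).invertibleOfIsUnitDet (isUnit_iff_ne_zero.mpr hMdet)
  apply Finset.lcm_dvd
  intro i _
  apply Finset.lcm_dvd
  rintro ⟨f, g⟩ -
  rw [RatFunc.denom_dvd hM]
  set X' := X.submatrix f id with hX'
  set Y' := Y.submatrix id g with hY'
  have hmin : (Matrix.det fun a b => R (f a) (g b))
      = ((X'.map alg) * (M.map alg)⁻¹ * (Y'.map alg)).det := by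
    congr 1
    ext a b
    simp [hR, Matrix.mul_apply, hX', hY']
  refine ⟨(-1) ^ i * (Matrix.fromBlocks M Y' X' (0 : Matrix (Fin i) (Fin i) (Polynomial k))).det, ?_⟩
  rw [eq_div_iff halgM]
  have hP : alg ((Matrix.fromBlocks M Y' X' (0 : Matrix (Fin i) (Fin i) (Polynomial k))).det)
      = (Matrix.fromBlocks (M.map alg) (Y'.map alg) (X'.map alg)
          (0 : Matrix (Fin i) (Fin i) (RatFunc k))).det := by
    rw [RingHom.map_det, RingHom.mapMatrix_apply, Matrix.fromBlocks_map]
    congr 1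
    simp
  rw [hmin, map_mul, hP, Matrix.det_fromBlocks₁₁, Matrix.invOf_eq_nonsing_inv, zero_sub,
    Matrix.det_neg]
  simp only [map_mul, map_pow, map_neg, map_one, Fintype.card_fin, RingHom.map_det,
    RingHom.mapMatrix_apply]
  have h1 : ((-1 : RatFunc k)) ^ (i * 2) = 1 := by
    rw [mul_comm, pow_mul, neg_one_sq, one_pow]
  ring_nf
  rw [h1, mul_one]
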